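/- Let t ≥ 1 and let P_t be the path with vertex set {1,...,t+1} and edges {i,i+1} for i ∈ {1,...,t}. For any normalized P_t-polymatroidal function p, we have p({1,...,t+1}) = Σ_{i=1}^{t} p({i,i+1}) − Σ_{i=2}^{t} p({i}). -/

import Mathlib

/-- A normalized `F`-polymatroidal function: `p ∅ = 0`, `p V = 1`, monotone,
submodular, and modular on pairs `A, B` such that `A ∩ B` separates
`A \ B` from `B \ A` in `F`. -/
def IsPolymatroidal {V : Type*} [Fintype V] [DecidableEq V]
    (F : SimpleGraph V) (p : Finset V → ℝ) : Prop :=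
  p ∅ = 0 ∧ p Finset.univ = 1 ∧
  (∀ A B : Finset V, A ⊆ B → p A ≤ p B) ∧
  (∀ A B : Finset V, p (A ∩ B) + p (A ∪ B) ≤ p A + p B) ∧
  (∀ A B : Finset V, (∀ a ∈ A \ B, ∀ b ∈ B \ A, ¬F.Adj a b) →
    p (A ∩ B) + p (A ∪ B) = p A + p B)

open Fin.NatCast in
/-- For any normalized `P_t`-polymatroidal function `p`,
`p(V(P_t)) = Σ_{edges} p({i,i+1}) − Σ_{inner vertices} p({i})`.
Here `P_t` is `SimpleGraph.pathGraph (t+1)`, on vertices `Fin (t+1)`. -/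
theorem polymatroid_path_decomposition (t : ℕ) (ht : 1 ≤ t)
    (p : Finset (Fin (t + 1)) → ℝ)
    (hp : IsPolymatroidal (SimpleGraph.pathGraph (t + 1)) p) :
    p Finset.univ =
      (∑ i : Fin t, p {i.castSucc, i.succ}) -
        ∑ i ∈ Finset.univ.filter (fun i : Fin t => (i : ℕ) ≠ 0), p {i.castSucc} := by
  obtain ⟨-, -, -, -, hmod⟩ := hp
  -- key modular step
  have key : ∀ k : ℕ, k < t →
      p (Finset.Iic (((k+1 : ℕ) : Fin (t+1)))) + p {((k : ℕ) : Fin (t+1))} =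
      p (Finset.Iic ((k : ℕ) : Fin (t+1))) +
        p {((k : ℕ) : Fin (t+1)), ((k+1 : ℕ) : Fin (t+1))} := by
    intro k hk
    set a : Fin (t+1) := ((k : ℕ) : Fin (t+1)) with haa
    set b : Fin (t+1) := ((k+1 : ℕ) : Fin (t+1)) with hbb
    have ha : a.val = k := Fin.val_cast_of_lt (by omega)
    have hb : b.val = k + 1 := Fin.val_cast_of_lt (by omega)
    have hsep : ∀ x ∈ Finset.Iic a \ ({a, b} : Finset (Fin (t+1))),
        ∀ y ∈ ({a, b} : Finset (Fin (t+1))) \ Finset.Iic a,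
        ¬(SimpleGraph.pathGraph (t+1)).Adj x y := by
      intro x hx y hy hadj
      simp only [Finset.mem_sdiff, Finset.mem_Iic, Finset.mem_insert,
        Finset.mem_singleton] at hx hy
      have hxa : x.val ≤ k := by
        have := hx.1
        rw [Fin.le_def, ha] at this; exact this
      have hxne : x.val ≠ k := by
        intro h; exact hx.2 (Or.inl (Fin.ext (by rw [ha, h])))
      have hyb : y = b := by
        rcases hy.1 with h | h
        · exact absurd (h ▸ le_refl a) hy.2
        · exact h
      rw [SimpleGraph.pathGraph_adj] at hadj
      rw [hyb, hb] at hadj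
      omega
    have := hmod (Finset.Iic a) {a, b} hsep
    have hinter : Finset.Iic a ∩ ({a, b} : Finset (Fin (t+1))) = {a} := by
      ext x
      simp only [Finset.mem_inter, Finset.mem_Iic, Finset.mem_insert,
        Finset.mem_singleton]
      constructor
      · rintro ⟨hle, h | h⟩
        · exact h
        · exfalso; rw [h, Fin.le_def, hb, ha] at hle; omega
      · rintro rfl; exact ⟨le_refl _, Or.inl rfl⟩
    have hunion : Finset.Iic a ∪ ({a, b} : Finset (Fin (t+1))) = Finset.Iic b := by
      ext x
      simp only [Finset.mem_union, Finset.mem_Iic, Finset.mem_insert,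
        Finset.mem_singleton, Fin.le_def, ha, hb]
      constructor
      · rintro (h | h | h)
        · omega
        · rw [h, ha]; omega
        · rw [h, hb]
      · intro h
        rcases Nat.lt_or_ge x.val (k+1) with h' | h'
        · left; omega
        · right; right; exact Fin.ext (by omega)
    rw [hinter, hunion] at this
    linarith
  -- main induction
  have main : ∀ k : ℕ, 1 ≤ k → k ≤ t →
      p (Finset.Iic ((k : ℕ) : Fin (t+1))) =
        (∑ i ∈ Finset.range k,
          p {((i : ℕ) : Fin (t+1)), ((i+1 : ℕ) : Fin (t+1))}) -
        ∑ i ∈ Finset.Ico 1 k, p {((i : ℕ) : Fin (t+1))} := by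
    intro k
    induction k with
    | zero => omega
    | succ k ih =>
      intro _ hk
      rcases Nat.eq_zero_or_pos k with rfl | hk1
      · -- base case k+1 = 1
        have hIic : Finset.Iic ((1 : ℕ) : Fin (t+1)) =
            ({((0 : ℕ) : Fin (t+1)), ((1 : ℕ) : Fin (t+1))} : Finset (Fin (t+1))) := by
          have h1 : (((1 : ℕ) : Fin (t+1))).val = 1 := Fin.val_cast_of_lt (by omega)
          have h0 : (((0 : ℕ) : Fin (t+1))).val = 0 := Fin.val_cast_of_lt (by omega)
          ext x
          simp only [Finset.mem_Iic, Finset.mem_insert, Finset.mem_singleton,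
            Fin.le_def, h1, Fin.ext_iff, h0]
          omega
        rw [hIic]; norm_num
      · have hstep := key k (by omega)
        rw [Finset.sum_range_succ, Finset.sum_Ico_succ_top hk1]
        have hih := ih hk1 (by omega)
        linarith
  -- conclude
  have huniv : Finset.Iic ((t : ℕ) : Fin (t+1)) = (Finset.univ : Finset (Fin (t+1))) := by
    have : ((t : ℕ) : Fin (t+1)) = Fin.last t := Fin.ext (Fin.val_cast_of_lt (by omega))
    rw [this]
    ext x; simp [Fin.le_last]
  have := main t ht le_rfl
  rw [huniv] at this
  rw [this]
  congr 1
  · rw [← Fin.sum_univ_eq_sum_range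
      (fun i => p {((i : ℕ) : Fin (t+1)), ((i+1 : ℕ) : Fin (t+1))}) t]
    apply Finset.sum_congr rfl
    intro i _
    congr 2
    · exact Fin.ext (by simp [Fin.val_cast_of_lt (by omega : (i : ℕ) < t + 1)])
    · exact congrArg _ (Fin.ext (by
        simp [Fin.val_cast_of_lt (by omega : (i : ℕ) + 1 < t + 1)]))
  · have h1 : Finset.filter (fun i => i ≠ 0) (Finset.range t) = Finset.Ico 1 t := by
      ext x; simp; omega
    calc ∑ i ∈ Finset.Ico 1 t, p {((i : ℕ) : Fin (t+1))}
        = ∑ i ∈ Finset.range t,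
            (if i ≠ 0 then p {((i : ℕ) : Fin (t+1))} else 0) := by
          rw [← Finset.sum_filter, h1]
      _ = ∑ i : Fin t,
            (if (i : ℕ) ≠ 0 then p {(((i : ℕ) : ℕ) : Fin (t+1))} else 0) :=
          (Fin.sum_univ_eq_sum_range
            (fun i => if i ≠ 0 then p {((i : ℕ) : Fin (t+1))} else 0) t).symm
      _ = ∑ i ∈ Finset.univ.filter (fun i : Fin t => (i : ℕ) ≠ 0), p {i.castSucc} := by
          rw [Finset.sum_filter]
          apply Finset.sum_congr rfl
          intro i _
          have hc : i.castSucc = ((i : ℕ) : Fin (t+1)) :=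
            Fin.ext (by simp [Fin.val_cast_of_lt (by omega : (i : ℕ) < t + 1)])
          rw [hc]
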